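/- Let P be a finite poset and R a commutative unital ring. Set Z^3_1(P,R) = J^3_1(P,R) and Z^3_{i+1}(P,R) = [Z^3_i(P,R), Z^3_i(P,R)]. Then the quotient algebra Z^3_2(P,R)/Z^3_3(P,R) is isomorphic as an R-algebra to the direct sum ⊕_{(x,y): l(x,y)=1} R·(e_{xxy}+e_{xyy}), i.e. to a direct sum of copies of R indexed by the pairs x < y in P with l(x,y) = 1, with coordinatewise multiplication. -/

import Mathlib

/-- 3-flags (chains x ≤ y ≤ z) in a poset `P`. -/
abbrev Flag3 (P : Type*) [PartialOrder P] : Type _ :=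
  {t : P × P × P // t.1 ≤ t.2.1 ∧ t.2.1 ≤ t.2.2}

/-- `ell x y` is the length of the interval `[x,y]`, i.e. the maximal cardinality of a
chain in `[x,y]` minus one. -/
noncomputable def ell {P : Type*} [PartialOrder P] (x y : P) : ℕ∞ :=
  (Set.Icc x y).chainHeight (· < ·) - 1

section PreDefs

variable (P R : Type*) [PartialOrder P] [LocallyFiniteOrder P] [CommRing R]

/-- The multiplication of the partial flag incidence algebra `I^3(P,R)`. -/
def mul3 : (Flag3 P → R) → (Flag3 P → R) → (Flag3 P → R) := fun f g t =>
  ∑ p ∈ ((Finset.Icc t.1.1 t.1.2.1) ×ˢ (Finset.Icc t.1.2.1 t.1.2.2)).attach,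
    f ⟨(t.1.1, p.1.1, p.1.2), by
        obtain ⟨h1, h2⟩ := Finset.mem_product.mp p.2
        rw [Finset.mem_Icc] at h1 h2
        exact ⟨h1.1, h1.2.trans h2.1⟩⟩ *
    g ⟨(p.1.1, p.1.2, t.1.2.2), by
        obtain ⟨h1, h2⟩ := Finset.mem_product.mp p.2
        rw [Finset.mem_Icc] at h1 h2
        exact ⟨h1.2.trans h2.1, h2.2⟩⟩

variable {P}

/-- The standard basis element `e_t` of `I^3(P,R)`. -/
def e3 [DecidableEq P] (t0 : Flag3 P) : Flag3 P → R := fun t => if t = t0 then 1 else 0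

variable (P)

/-- The ideal `J^3_k(P,R)` of functions vanishing on flags `(x,y,z)` with `l(x,z) < k`. -/
def J3 (k : ℕ) : Submodule R (Flag3 P → R) where
  carrier := {f | ∀ t : Flag3 P, ell t.1.1 t.1.2.2 < (k : ℕ∞) → f t = 0}
  add_mem' := by
    intro f g hf hg t ht
    simp only [Pi.add_apply, hf t ht, hg t ht, add_zero]
  zero_mem' := by intro t _; rfl
  smul_mem' := by
    intro c f hf t ht
    simp only [Pi.smul_apply, hf t ht, smul_zero]

/-- The commutator submodule `[U,V]`. -/
def commSub (U V : Submodule R (Flag3 P → R)) : Submodule R (Flag3 P → R) :=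
  Submodule.span R {h | ∃ f ∈ U, ∃ g ∈ V, h = mul3 P R f g - mul3 P R g f}

end PreDefs

/-- `Z^3_2(P,R) = [J^3_1(P,R), J^3_1(P,R)]`. -/
def Z3two (P R : Type*) [PartialOrder P] [LocallyFiniteOrder P] [CommRing R] :
    Submodule R (Flag3 P → R) :=
  commSub P R (J3 P R 1) (J3 P R 1)

/-- `Z^3_3(P,R) = [Z^3_2(P,R), Z^3_2(P,R)]`. -/
def Z3three (P R : Type*) [PartialOrder P] [LocallyFiniteOrder P] [CommRing R] :
    Submodule R (Flag3 P → R) :=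
  commSub P R (Z3two P R) (Z3two P R)

/-! ### Auxiliary lemmas on `ell` -/

section EllLemmas

variable {P : Type*} [PartialOrder P] {x y z c : P}

lemma aux_ell_self (x : P) : ell x x = 0 := by
  have h1 : (Set.Icc x x).chainHeight (· < ·) = 1 := by
    rw [Set.Icc_self, ← Set.encard_eq_chainHeight_of_isChain _ (IsChain.singleton),
      Set.encard_singleton]
  rw [ell, h1, tsub_self]

lemma aux_chain_le (n : ℕ) (l : Set P) (hl : l ⊆ Set.Icc x z) (hc : IsChain (· < ·) l)
    (hlen : l.encard = n) : (n : ℕ∞) ≤ (Set.Icc x z).chainHeight (· < ·) :=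
  hlen ▸ Set.encard_le_chainHeight_of_isChain _ _ hl hc

lemma aux_one_le_ell (h : x < z) : 1 ≤ ell x z := by
  have h2 : ((2 : ℕ) : ℕ∞) ≤ (Set.Icc x z).chainHeight (· < ·) := by
    refine aux_chain_le 2 {x, z} ?_ ?_ (by rw [Set.encard_pair h.ne]; rfl)
    · intro i hi
      rcases hi with rfl | rfl <;> simp [Set.mem_Icc, h.le]
    · intro a ha b hb hab
      rcases ha with rfl | rfl <;> rcases hb with rfl | rfl <;> simp_all
  rw [ell]
  refine (ENat.addLECancellable_of_ne_top (show (1:ℕ∞) ≠ ⊤ by simp)).le_tsub_of_add_le_left ?_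
  exact le_trans (by norm_num) h2

lemma aux_two_le_ell (h1 : x < c) (h2 : c < z) : 2 ≤ ell x z := by
  have h3 : ((3 : ℕ) : ℕ∞) ≤ (Set.Icc x z).chainHeight (· < ·) := by
    refine aux_chain_le 3 {x, c, z} ?_ ?_
      (Set.encard_eq_three.mpr ⟨x, c, z, h1.ne, (h1.trans h2).ne, h2.ne, rfl⟩)
    · intro i hi
      rcases hi with rfl | rfl | rfl <;>
        simp [Set.mem_Icc, h1.le, h2.le, (h1.trans h2).le]
    · intro a ha b hb hab
      have h13 := h1.trans h2
      rcases ha with rfl | rfl | rfl <;> rcases hb with rfl | rfl | rfl <;> simp_all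
  rw [ell]
  refine (ENat.addLECancellable_of_ne_top (show (1:ℕ∞) ≠ ⊤ by simp)).le_tsub_of_add_le_left ?_
  exact le_trans (by norm_num) h3

lemma aux_ell_le_one (h : ∀ c, x < c → c < z → False) : ell x z ≤ 1 := by
  have h2 : (Set.Icc x z).chainHeight (· < ·) ≤ 2 := by
    by_contra hc
    rw [not_le] at hc
    have h3 : ((3:ℕ) : ℕ∞) ≤ (Set.Icc x z).chainHeight (· < ·) := by
      have := (ENat.add_one_le_iff (show (2:ℕ∞) ≠ ⊤ by simp)).mpr hc
      exact le_trans (by norm_num) this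
    obtain ⟨l, hsub, hlen, -⟩ := Set.exists_isChain_of_le_chainHeight 3 h3
    obtain ⟨a, b, c', hab, hac, hbc, rfl⟩ := Set.encard_eq_three.mp hlen
    have key : ∀ w ∈ ({a, b, c'} : Set P), w = x ∨ w = z := by
      intro w hw
      have hw' := Set.mem_Icc.mp (hsub hw)
      by_contra hne
      push_neg at hne
      exact h w (hw'.1.lt_of_ne (Ne.symm hne.1)) (hw'.2.lt_of_ne hne.2)
    rcases key a (by simp) with ha | ha <;> rcases key b (by simp) with hb | hb <;>
      rcases key c' (by simp) with hc' | hc' <;> simp_all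
  rw [ell]
  exact tsub_le_iff_right.mpr (le_trans h2 (by norm_num))

lemma aux_ell_eq_one (hxz : x < z) (h : ∀ c, x < c → c < z → False) : ell x z = 1 :=
  le_antisymm (aux_ell_le_one h) (aux_one_le_ell hxz)

lemma aux_lt_of_ell_eq_one (hxz : x ≤ z) (h : ell x z = 1) : x < z := by
  rcases hxz.lt_or_eq with h' | rfl
  · exact h'
  · rw [aux_ell_self] at h; exact absurd h (by simp)

lemma aux_middle_of_two_le_ell (h : 2 ≤ ell x z) : ∃ c, x < c ∧ c < z := by
  by_contra hc
  push_neg at hc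
  have := aux_ell_le_one (fun c h1 h2 => hc c h1 h2)
  exact absurd (h.trans this) (by norm_num)

lemma aux_mem_of_ell_eq_one (h : ell x z = 1) (hxy : x ≤ y) (hyz : y ≤ z) :
    y = x ∨ y = z := by
  by_contra hc
  push_neg at hc
  have h2 := aux_two_le_ell (hxy.lt_of_ne (Ne.symm hc.1)) (hyz.lt_of_ne hc.2)
  rw [h] at h2
  exact absurd h2 (by norm_num)

lemma aux_enat_le_one_of_lt_two {a : ℕ∞} (h : a < 2) : a ≤ 1 :=
  ENat.lt_add_one_iff (by simp) |>.mp h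

end EllLemmas

section IccPair

variable {P : Type*} [PartialOrder P] [LocallyFiniteOrder P] [DecidableEq P] {x z : P}

lemma aux_Icc_pair (hxz : x ≤ z) (h : ell x z = 1) : Finset.Icc x z = {x, z} := by
  have hlt := aux_lt_of_ell_eq_one hxz h
  ext y
  simp only [Finset.mem_Icc, Finset.mem_insert, Finset.mem_singleton]
  constructor
  · rintro ⟨h1, h2⟩
    rcases aux_mem_of_ell_eq_one h h1 h2 with h' | h' <;> [left; right] <;> exact h'
  · rintro (rfl | rfl)
    · exact ⟨le_refl _, hlt.le⟩
    · exact ⟨hlt.le, le_refl _⟩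

end IccPair

/-! ### Auxiliary lemmas on `mul3` and basis elements -/

set_option linter.unusedSectionVars false

section Mul3Lemmas

open scoped Classical

variable {P R : Type*} [PartialOrder P] [LocallyFiniteOrder P] [CommRing R] [DecidableEq P]

/-- Indicator of a triple. -/
def d3 (R : Type*) [CommRing R] {P : Type*} [PartialOrder P] [DecidableEq P]
    (s : P × P × P) : Flag3 P → R := fun t => if t.1 = s then 1 else 0

/-- Auxiliary summand for `mul3`. -/
noncomputable def mulAux (f g : Flag3 P → R) (t : Flag3 P) (p : P × P) : R :=
  if h : t.1.1 ≤ p.1 ∧ p.1 ≤ p.2 ∧ p.2 ≤ t.1.2.2 then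
    f ⟨(t.1.1, p.1, p.2), ⟨h.1, h.2.1⟩⟩ * g ⟨(p.1, p.2, t.1.2.2), ⟨h.2.1, h.2.2⟩⟩
  else 0

lemma mul3_apply (f g : Flag3 P → R) (t : Flag3 P) :
    mul3 P R f g t
      = ∑ p ∈ (Finset.Icc t.1.1 t.1.2.1) ×ˢ (Finset.Icc t.1.2.1 t.1.2.2),
          mulAux f g t p := by
  rw [mul3, ← Finset.sum_attach
    ((Finset.Icc t.1.1 t.1.2.1) ×ˢ (Finset.Icc t.1.2.1 t.1.2.2)) (mulAux f g t)]
  refine Finset.sum_congr rfl fun p _ => ?_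
  obtain ⟨h1, h2⟩ := Finset.mem_product.mp p.2
  rw [Finset.mem_Icc] at h1 h2
  rw [mulAux, dif_pos ⟨h1.1, ⟨h1.2.trans h2.1, h2.2⟩⟩]

lemma mul3_add_left (f f' g : Flag3 P → R) :
    mul3 P R (f + f') g = mul3 P R f g + mul3 P R f' g := by
  funext t
  simp only [mul3, Pi.add_apply, add_mul, Finset.sum_add_distrib]

lemma mul3_add_right (f g g' : Flag3 P → R) :
    mul3 P R f (g + g') = mul3 P R f g + mul3 P R f g' := by
  funext t
  simp only [mul3, Pi.add_apply, mul_add, Finset.sum_add_distrib]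

lemma mul3_d3_zero (s u : P × P × P) (h : s.2.1 ≠ u.1 ∨ s.2.2 ≠ u.2.1) :
    mul3 P R (d3 R s) (d3 R u) = 0 := by
  funext t0
  rw [mul3_apply]
  refine Finset.sum_eq_zero fun p _ => ?_
  rw [mulAux]
  split
  · simp only [d3]
    split_ifs with h1 h2
    · exfalso
      rw [Prod.ext_iff, Prod.ext_iff] at h1 h2
      rcases h with h | h
      · exact h (h1.2.1.symm.trans h2.1)
      · exact h (h1.2.2.symm.trans h2.2.1)
    · simp
    · simp
    · simp
  · rfl

lemma mul3_d3 (a b c d : P) (hab : a ≤ b) (hbc : b ≤ c) (hcd : c ≤ d) :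
    mul3 P R (d3 R (a, b, c)) (d3 R (b, c, d)) = ∑ w ∈ Finset.Icc b c, d3 R (a, w, d) := by
  funext t0
  obtain ⟨⟨x, y, z⟩, hxy, hyz⟩ := t0
  rw [mul3_apply]
  simp only [Finset.sum_apply]
  have key : ∀ p ∈ (Finset.Icc x y) ×ˢ (Finset.Icc y z),
      mulAux (d3 R (a,b,c)) (d3 R (b,c,d)) ⟨(x,y,z), hxy, hyz⟩ p
        = if p = (b,c) ∧ x = a ∧ z = d then 1 else 0 := by
    intro p hp
    rw [Finset.mem_product, Finset.mem_Icc, Finset.mem_Icc] at hp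
    rw [mulAux, dif_pos ⟨hp.1.1, le_trans hp.1.2 hp.2.1, hp.2.2⟩]
    simp only [d3, Prod.mk.injEq]
    split_ifs with h1 h2 h3 <;> simp_all [Prod.ext_iff] <;> tauto
  rw [Finset.sum_congr rfl key]
  by_cases hxa : x = a ∧ z = d
  · obtain ⟨rfl, rfl⟩ := hxa
    simp only [eq_self_iff_true, true_and, and_true]
    rw [Finset.sum_ite_eq' ((Finset.Icc x y) ×ˢ (Finset.Icc y z)) (b,c) (fun _ => (1:R))]
    have hR : ∀ w, (d3 R (x, w, z) ⟨(x,y,z), hxy, hyz⟩ : R) = if y = w then 1 else 0 := by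
      intro w
      simp only [d3, Prod.mk.injEq, true_and, and_true]
    simp only [hR]
    rw [Finset.sum_ite_eq (Finset.Icc b c) y (fun _ => (1:R))]
    simp only [Finset.mem_product, Finset.mem_Icc]
    split_ifs with h1 h2 <;> first | rfl | tauto
  · rw [Finset.sum_eq_zero (fun p _ => if_neg (by tauto))]
    refine (Finset.sum_eq_zero fun w _ => ?_).symm
    simp only [d3, Prod.mk.injEq]
    rw [if_neg (by tauto)]

lemma mul3_deg (f g : Flag3 P → R) (x : P) (h1 : x ≤ x) (h2 : x ≤ x) :
    mul3 P R f g ⟨(x,x,x), h1, h2⟩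
      = f ⟨(x,x,x), h1, h2⟩ * g ⟨(x,x,x), h1, h2⟩ := by
  rw [mul3_apply]
  have hset : (Finset.Icc x x) ×ˢ (Finset.Icc x x) = {(x,x)} := by
    rw [Finset.Icc_self, Finset.singleton_product_singleton]
  rw [hset, Finset.sum_singleton, mulAux, dif_pos ⟨le_refl x, le_refl x, le_refl x⟩]

lemma mul3_cover_x (f g : Flag3 P → R) {x z : P} (hxz : x ≤ z) (h1 : ell x z = 1)
    (hf : f ⟨(x,x,x), le_refl x, le_refl x⟩ = 0) :
    mul3 P R f g ⟨(x,x,z), le_refl x, hxz⟩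
      = f ⟨(x,x,z), le_refl x, hxz⟩ * g ⟨(x,z,z), hxz, le_refl z⟩ := by
  have hlt := aux_lt_of_ell_eq_one hxz h1
  rw [mul3_apply]
  rw [show Finset.Icc x x = {x} from Finset.Icc_self x, aux_Icc_pair hxz h1,
    Finset.sum_product, Finset.sum_singleton, Finset.sum_pair hlt.ne,
    mulAux, dif_pos ⟨le_refl x, le_refl x, hxz⟩,
    mulAux, dif_pos ⟨le_refl x, hxz, le_refl z⟩, hf, zero_mul, zero_add]

lemma mul3_cover_z (f g : Flag3 P → R) {x z : P} (hxz : x ≤ z) (h1 : ell x z = 1)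
    (hg : g ⟨(z,z,z), le_refl z, le_refl z⟩ = 0) :
    mul3 P R f g ⟨(x,z,z), hxz, le_refl z⟩
      = f ⟨(x,x,z), le_refl x, hxz⟩ * g ⟨(x,z,z), hxz, le_refl z⟩ := by
  have hlt := aux_lt_of_ell_eq_one hxz h1
  rw [mul3_apply]
  rw [show Finset.Icc z z = {z} from Finset.Icc_self z, aux_Icc_pair hxz h1,
    Finset.sum_product, Finset.sum_pair hlt.ne, Finset.sum_singleton, Finset.sum_singleton,
    mulAux, dif_pos ⟨le_refl x, hxz, le_refl z⟩,
    mulAux, dif_pos ⟨hxz, le_refl z, le_refl z⟩, hg, mul_zero, add_zero]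

lemma J1_deg {f : Flag3 P → R} (hf : f ∈ J3 P R 1) (x : P) (h1 : x ≤ x) (h2 : x ≤ x) :
    f ⟨(x,x,x), h1, h2⟩ = 0 := by
  apply hf
  show ell x x < _
  rw [aux_ell_self]
  exact_mod_cast zero_lt_one

lemma d3_mem_J1 {s : P × P × P} (hs : s.1 ≠ s.2.2) : (d3 R s : Flag3 P → R) ∈ J3 P R 1 := by
  intro t ht
  obtain ⟨⟨x, y, z⟩, hxy, hyz⟩ := t
  rw [d3]
  simp only []
  split_ifs with h
  · exfalso
    subst h
    have hlt : x < z := lt_of_le_of_ne (hxy.trans hyz) hs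
    exact absurd (aux_one_le_ell hlt) (not_le.mpr (by exact_mod_cast ht))
  · rfl

lemma comm_mem_Z3two {f g : Flag3 P → R} (hf : f ∈ J3 P R 1) (hg : g ∈ J3 P R 1) :
    mul3 P R f g - mul3 P R g f ∈ Z3two P R :=
  Submodule.subset_span ⟨f, hf, g, hg, rfl⟩

lemma comm_mem_Z3three {f g : Flag3 P → R} (hf : f ∈ Z3two P R) (hg : g ∈ Z3two P R) :
    mul3 P R f g - mul3 P R g f ∈ Z3three P R :=
  Submodule.subset_span ⟨f, hf, g, hg, rfl⟩

lemma strict_mem_Z3two {x y z : P} (hxy : x < y) (hyz : y < z) :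
    (d3 R (x,y,z) : Flag3 P → R) ∈ Z3two P R := by
  have h1 : mul3 P R (d3 R (x,y,y)) (d3 R (y,y,z)) = d3 R (x,y,z) := by
    rw [mul3_d3 x y y z hxy.le (le_refl y) hyz.le, Finset.Icc_self, Finset.sum_singleton]
  have h2 : mul3 P R (d3 R (y,y,z)) (d3 R (x,y,y)) = 0 :=
    mul3_d3_zero _ _ (Or.inl hxy.ne')
  have h3 := comm_mem_Z3two (R := R)
    (d3_mem_J1 (show (x,y,y).1 ≠ (x,y,y).2.2 from hxy.ne))
    (d3_mem_J1 (show (y,y,z).1 ≠ (y,y,z).2.2 from hyz.ne))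
  rw [h1, h2, sub_zero] at h3
  exact h3

lemma midx_mem_Z3two {x c z : P} (hxc : x < c) (hcz : c < z) :
    (d3 R (x,x,z) : Flag3 P → R) ∈ Z3two P R := by
  have h1 : mul3 P R (d3 R (x,x,c)) (d3 R (x,c,z)) = ∑ w ∈ Finset.Icc x c, d3 R (x,w,z) :=
    mul3_d3 x x c z (le_refl x) hxc.le hcz.le
  have h2 : mul3 P R (d3 R (x,c,z)) (d3 R (x,x,c)) = 0 :=
    mul3_d3_zero _ _ (Or.inl hxc.ne')
  have hcomm := comm_mem_Z3two (R := R)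
    (d3_mem_J1 (show (x,x,c).1 ≠ (x,x,c).2.2 from hxc.ne))
    (d3_mem_J1 (show (x,c,z).1 ≠ (x,c,z).2.2 from (hxc.trans hcz).ne))
  rw [h1, h2, sub_zero, Finset.Icc_eq_cons_Ioc hxc.le, Finset.sum_cons] at hcomm
  have hstrict : ∑ w ∈ Finset.Ioc x c, (d3 R (x,w,z) : Flag3 P → R) ∈ Z3two P R :=
    Submodule.sum_mem _ (fun w hw => by
      rw [Finset.mem_Ioc] at hw
      exact strict_mem_Z3two hw.1 (lt_of_le_of_lt hw.2 hcz))
  simpa using Submodule.sub_mem _ hcomm hstrict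

lemma midz_mem_Z3two {x c z : P} (hxc : x < c) (hcz : c < z) :
    (d3 R (x,z,z) : Flag3 P → R) ∈ Z3two P R := by
  have h1 : mul3 P R (d3 R (x,c,z)) (d3 R (c,z,z)) = ∑ w ∈ Finset.Icc c z, d3 R (x,w,z) :=
    mul3_d3 x c z z hxc.le hcz.le (le_refl z)
  have h2 : mul3 P R (d3 R (c,z,z)) (d3 R (x,c,z)) = 0 :=
    mul3_d3_zero _ _ (Or.inl (hxc.trans hcz).ne')
  have hcomm := comm_mem_Z3two (R := R)
    (d3_mem_J1 (show (x,c,z).1 ≠ (x,c,z).2.2 from (hxc.trans hcz).ne))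
    (d3_mem_J1 (show (c,z,z).1 ≠ (c,z,z).2.2 from hcz.ne))
  rw [h1, h2, sub_zero, Finset.Icc_eq_cons_Ico hcz.le, Finset.sum_cons] at hcomm
  have hstrict : ∑ w ∈ Finset.Ico c z, (d3 R (x,w,z) : Flag3 P → R) ∈ Z3two P R :=
    Submodule.sum_mem _ (fun w hw => by
      rw [Finset.mem_Ico] at hw
      exact strict_mem_Z3two (hxc.trans_le hw.1) hw.2)
  simpa using Submodule.sub_mem _ hcomm hstrict

lemma cover_mem_Z3two {x z : P} (hxz : x < z) (h1 : ell x z = 1) :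
    (d3 R (x,x,z) + d3 R (x,z,z) : Flag3 P → R) ∈ Z3two P R := by
  have hp : mul3 P R (d3 R (x,x,z)) (d3 R (x,z,z)) = ∑ w ∈ Finset.Icc x z, d3 R (x,w,z) :=
    mul3_d3 x x z z (le_refl x) hxz.le (le_refl z)
  have h2 : mul3 P R (d3 R (x,z,z)) (d3 R (x,x,z)) = 0 :=
    mul3_d3_zero _ _ (Or.inl hxz.ne')
  have hcomm := comm_mem_Z3two (R := R)
    (d3_mem_J1 (show (x,x,z).1 ≠ (x,x,z).2.2 from hxz.ne))
    (d3_mem_J1 (show (x,z,z).1 ≠ (x,z,z).2.2 from hxz.ne))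
  rw [hp, h2, sub_zero, aux_Icc_pair hxz.le h1,
    show ({x,z} : Finset P) = insert x {z} from rfl,
    Finset.sum_insert (by simp [hxz.ne]), Finset.sum_singleton] at hcomm
  exact hcomm

/-- The submodule `W` characterizing `Z^3_2`. -/
def Wsub (P R : Type*) [PartialOrder P] [LocallyFiniteOrder P] [CommRing R] :
    Submodule R (Flag3 P → R) where
  carrier := {f | (∀ t : Flag3 P, t.1.1 = t.1.2.2 → f t = 0) ∧
    ∀ (x z : P) (hxz : x ≤ z), ell x z = 1 →
      f ⟨(x,x,z), le_refl x, hxz⟩ = f ⟨(x,z,z), hxz, le_refl z⟩}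
  add_mem' := by
    rintro f g ⟨hf1, hf2⟩ ⟨hg1, hg2⟩
    exact ⟨fun t ht => by simp [Pi.add_apply, hf1 t ht, hg1 t ht],
      fun x z hxz h => by simp only [Pi.add_apply, hf2 x z hxz h, hg2 x z hxz h]⟩
  zero_mem' := ⟨fun _ _ => rfl, fun _ _ _ _ => rfl⟩
  smul_mem' := by
    rintro c f ⟨hf1, hf2⟩
    exact ⟨fun t ht => by simp [Pi.smul_apply, hf1 t ht],
      fun x z hxz h => by simp only [Pi.smul_apply, hf2 x z hxz h]⟩

lemma Z3two_le_Wsub : Z3two P R ≤ Wsub P R := by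
  rw [Z3two, commSub, Submodule.span_le]
  rintro h ⟨f, hf, g, hg, rfl⟩
  constructor
  · rintro ⟨⟨x, y, z⟩, hxy, hyz⟩ ht
    have hz : x = z := ht
    subst hz
    have hy : y = x := le_antisymm hyz hxy
    subst hy
    rw [Pi.sub_apply, mul3_deg f g _ hxy hyz, mul3_deg g f _ hxy hyz,
      J1_deg hf _ hxy hyz, J1_deg hg _ hxy hyz]
    simp
  · intro x z hxz h1
    rw [Pi.sub_apply, Pi.sub_apply,
      mul3_cover_x f g hxz h1 (J1_deg hf x (le_refl x) (le_refl x)),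
      mul3_cover_x g f hxz h1 (J1_deg hg x (le_refl x) (le_refl x)),
      mul3_cover_z f g hxz h1 (J1_deg hg z (le_refl z) (le_refl z)),
      mul3_cover_z g f hxz h1 (J1_deg hf z (le_refl z) (le_refl z))]

lemma flag_cases (t : Flag3 P) (h : ell t.1.1 t.1.2.2 < 2) :
    t.1.1 = t.1.2.2 ∨
      (t.1.1 < t.1.2.2 ∧ ell t.1.1 t.1.2.2 = 1 ∧ (t.1.2.1 = t.1.1 ∨ t.1.2.1 = t.1.2.2)) := by
  obtain ⟨⟨x, y, z⟩, hxy, hyz⟩ := t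
  simp only [] at h ⊢
  by_cases hxz : x = z
  · exact Or.inl hxz
  · right
    have hlt : x < z := (hxy.trans hyz).lt_of_ne hxz
    have h1 : ell x z = 1 := le_antisymm (aux_enat_le_one_of_lt_two h) (aux_one_le_ell hlt)
    exact ⟨hlt, h1, aux_mem_of_ell_eq_one h1 hxy hyz⟩

lemma expand_d3 [Fintype (Flag3 P)] (f : Flag3 P → R) :
    f = ∑ t : Flag3 P, f t • d3 R t.1 := by
  funext t0
  rw [Finset.sum_apply, Finset.sum_eq_single t0]
  · simp [d3]
  · intro t _ hne
    simp only [Pi.smul_apply, d3, smul_eq_mul]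
    rw [if_neg (fun h => hne (Subtype.ext h.symm)), mul_zero]
  · intro h; exact absurd (Finset.mem_univ _) h

lemma ge2_mem_Z3two {t : Flag3 P} (h2 : 2 ≤ ell t.1.1 t.1.2.2) :
    (d3 R t.1 : Flag3 P → R) ∈ Z3two P R := by
  obtain ⟨⟨x, y, z⟩, hxy, hyz⟩ := t
  replace hxy : x ≤ y := hxy
  replace hyz : y ≤ z := hyz
  simp only [] at h2 ⊢
  obtain ⟨c, hc1, hc2⟩ := aux_middle_of_two_le_ell h2
  rcases hxy.lt_or_eq with hx | hx
  · rcases hyz.lt_or_eq with hz | hz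
    · exact strict_mem_Z3two hx hz
    · subst hz; exact midz_mem_Z3two hc1 hc2
  · subst hx
    rcases hyz.lt_or_eq with hz | hz
    · exact midx_mem_Z3two hc1 hc2
    · exfalso; subst hz
      rw [aux_ell_self] at h2
      exact absurd h2 (by norm_num)

lemma Wsub_le_Z3two [Fintype (Flag3 P)] : Wsub P R ≤ Z3two P R := by
  rintro f ⟨hf1, hf2⟩
  set f2 : Flag3 P → R := ∑ t : Flag3 P,
    (if t.1.2.1 = t.1.1 ∧ t.1.1 < t.1.2.2 ∧ ell t.1.1 t.1.2.2 = 1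
     then f t • (d3 R (t.1.1, t.1.1, t.1.2.2) + d3 R (t.1.1, t.1.2.2, t.1.2.2)) else 0)
    with hf2def
  have hf2mem : f2 ∈ Z3two P R := Submodule.sum_mem _ (fun t _ => by
    split_ifs with h
    · exact Submodule.smul_mem _ _ (cover_mem_Z3two h.2.1 h.2.2)
    · exact Submodule.zero_mem _)
  have hf2eval : ∀ t0 : Flag3 P, f2 t0 = ∑ t : Flag3 P,
      (if t.1.2.1 = t.1.1 ∧ t.1.1 < t.1.2.2 ∧ ell t.1.1 t.1.2.2 = 1
       then f t * ((if t0.1 = (t.1.1, t.1.1, t.1.2.2) then 1 else 0)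
         + (if t0.1 = (t.1.1, t.1.2.2, t.1.2.2) then 1 else 0)) else 0) := by
    intro t0
    rw [hf2def, Finset.sum_apply]
    refine Finset.sum_congr rfl fun t _ => ?_
    by_cases h : t.1.2.1 = t.1.1 ∧ t.1.1 < t.1.2.2 ∧ ell t.1.1 t.1.2.2 = 1
    · rw [if_pos h, if_pos h]
      simp only [Pi.smul_apply, Pi.add_apply, smul_eq_mul, d3]
    · rw [if_neg h, if_neg h]
      rfl
  have hvanish : ∀ t0 : Flag3 P, ell t0.1.1 t0.1.2.2 < 2 → (f - f2) t0 = 0 := by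
    rintro ⟨⟨x, y, z⟩, hxy, hyz⟩ ht
    rcases flag_cases _ ht with hdeg | ⟨hlt, h1, hy⟩
    · -- degenerate flag : x = z
      have hdeg' : x = z := hdeg
      rw [Pi.sub_apply, hf1 _ hdeg, hf2eval, Finset.sum_eq_zero, sub_zero]
      rintro ⟨⟨a, b, c⟩, hab, hbc⟩ _
      by_cases hC : b = a ∧ a < c ∧ ell a c = 1
      · rw [if_pos hC, if_neg, if_neg]
        · simp
        · intro he
          simp only [Prod.mk.injEq] at he
          exact absurd (he.1.symm.trans (hdeg'.trans he.2.2)) hC.2.1.ne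
        · intro he
          simp only [Prod.mk.injEq] at he
          exact absurd (he.1.symm.trans (hdeg'.trans he.2.2)) hC.2.1.ne
      · rw [if_neg hC]
    · -- cover flag
      have hlt' : x < z := hlt
      have h1' : ell x z = 1 := h1
      have hy' : y = x ∨ y = z := hy
      set tc : Flag3 P := ⟨(x, x, z), le_refl x, hxy.trans hyz⟩ with htc
      have hsum : f2 ⟨(x,y,z), hxy, hyz⟩ = f tc := by
        rw [hf2eval, Finset.sum_eq_single tc]
        · rw [if_pos ⟨rfl, hlt', h1'⟩]
          rcases hy' with h | h
          · rw [if_pos (show ((x:P),y,z) = (x,x,z) by rw [h]), if_neg, add_zero, mul_one]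
            intro he
            have e2 : y = z := congrArg (fun p => p.2.1) he
            exact hlt'.ne (h.symm.trans e2)
          · rw [if_neg, if_pos (show ((x:P),y,z) = (x,z,z) by rw [h]), zero_add, mul_one]
            intro he
            have e2 : y = x := congrArg (fun p => p.2.1) he
            exact hlt'.ne (e2.symm.trans h)
        · rintro ⟨⟨a, b, c⟩, hab, hbc⟩ _ hne
          by_cases hC : b = a ∧ a < c ∧ ell a c = 1
          · rw [if_pos hC, if_neg, if_neg]
            · simp
            · intro he
              simp only [Prod.mk.injEq] at he
              exact hne (Subtype.ext (by
                show (a, b, c) = (x, x, z)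
                rw [hC.1, ← he.1, ← he.2.2]))
            · intro he
              simp only [Prod.mk.injEq] at he
              exact hne (Subtype.ext (by
                show (a, b, c) = (x, x, z)
                rw [hC.1, ← he.1, ← he.2.2]))
          · rw [if_neg hC]
        · intro h; exact absurd (Finset.mem_univ _) h
      rw [Pi.sub_apply, hsum]
      rcases hy' with h | h
      · have he : (⟨(x,y,z), hxy, hyz⟩ : Flag3 P) = tc := Subtype.ext (show ((x:P),y,z) = (x,x,z) by rw [h])
        rw [he, sub_self]
      · have he : (⟨(x,y,z), hxy, hyz⟩ : Flag3 P)
            = ⟨(x,z,z), hxy.trans hyz, le_refl z⟩ := Subtype.ext (show ((x:P),y,z) = (x,z,z) by rw [h])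
        rw [he, htc, ← hf2 x z (hxy.trans hyz) h1', sub_self]
  have hmain : f - f2 ∈ Z3two P R := by
    rw [expand_d3 (f - f2)]
    refine Submodule.sum_mem _ (fun t _ => ?_)
    by_cases hz : (f - f2) t = 0
    · rw [hz, zero_smul]; exact Submodule.zero_mem _
    · refine Submodule.smul_mem _ _ (ge2_mem_Z3two ?_)
      by_contra hlt2
      exact hz (hvanish t (not_le.mp hlt2))
  have := Submodule.add_mem _ hmain hf2mem
  simpa using this

lemma mul3_smul_left (a : R) (f g : Flag3 P → R) :
    mul3 P R (a • f) g = a • mul3 P R f g := by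
  funext t
  simp only [mul3, Pi.smul_apply, smul_eq_mul, Finset.mul_sum, mul_assoc]

lemma mul3_smul_right (a : R) (f g : Flag3 P → R) :
    mul3 P R f (a • g) = a • mul3 P R f g := by
  funext t
  simp only [mul3, Pi.smul_apply, smul_eq_mul, Finset.mul_sum]
  refine Finset.sum_congr rfl fun p _ => ?_
  ring

lemma comm_eq_strict {x y z : P} (hxy : x < y) (hyz : y < z) (ca cb : R) :
    mul3 P R (ca • d3 R (x,x,y) + d3 R (x,y,y)) (d3 R (y,y,z) + cb • d3 R (y,z,z))
      - mul3 P R (d3 R (y,y,z) + cb • d3 R (y,z,z)) (ca • d3 R (x,x,y) + d3 R (x,y,y))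
      = d3 R (x,y,z) := by
  have key : mul3 P R (d3 R (x,y,y)) (d3 R (y,y,z)) = d3 R (x,y,z) := by
    rw [mul3_d3 x y y z hxy.le (le_refl y) hyz.le, Finset.Icc_self, Finset.sum_singleton]
  have z1 : mul3 P R (d3 R (y,y,z)) (d3 R (x,y,y)) = 0 := mul3_d3_zero _ _ (Or.inl hxy.ne')
  have z2 : mul3 P R (d3 R (x,x,y)) (d3 R (y,y,z)) = 0 := mul3_d3_zero _ _ (Or.inl hxy.ne)
  have z3 : mul3 P R (d3 R (x,x,y)) (d3 R (y,z,z)) = 0 := mul3_d3_zero _ _ (Or.inl hxy.ne)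
  have z4 : mul3 P R (d3 R (x,y,y)) (d3 R (y,z,z)) = 0 := mul3_d3_zero _ _ (Or.inr hyz.ne)
  have z5 : mul3 P R (d3 R (y,y,z)) (d3 R (x,x,y)) = 0 := mul3_d3_zero _ _ (Or.inl hxy.ne')
  have z6 : mul3 P R (d3 R (y,z,z)) (d3 R (x,x,y)) = 0 :=
    mul3_d3_zero _ _ (Or.inl (hxy.trans hyz).ne')
  have z7 : mul3 P R (d3 R (y,z,z)) (d3 R (x,y,y)) = 0 :=
    mul3_d3_zero _ _ (Or.inl (hxy.trans hyz).ne')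
  simp only [mul3_add_left, mul3_add_right, mul3_smul_left, mul3_smul_right,
    key, z1, z2, z3, z4, z5, z6, z7, smul_zero, add_zero, zero_add, sub_zero]

lemma strict_mem_Z3three {x y z : P} (hxy : x < y) (hyz : y < z) :
    (d3 R (x,y,z) : Flag3 P → R) ∈ Z3three P R := by
  obtain ⟨ca, humem⟩ : ∃ ca : R, ca • d3 R (x,x,y) + d3 R (x,y,y) ∈ Z3two P R := by
    rcases em (∃ c, x < c ∧ c < y) with ⟨c, hc1, hc2⟩ | hu
    · exact ⟨0, by simpa using midz_mem_Z3two hc1 hc2⟩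
    · exact ⟨1, by simpa using
        cover_mem_Z3two hxy (aux_ell_eq_one hxy (fun c h1 h2 => hu ⟨c, h1, h2⟩))⟩
  obtain ⟨cb, hvmem⟩ : ∃ cb : R, d3 R (y,y,z) + cb • d3 R (y,z,z) ∈ Z3two P R := by
    rcases em (∃ c, y < c ∧ c < z) with ⟨c, hc1, hc2⟩ | hv
    · exact ⟨0, by simpa using midx_mem_Z3two hc1 hc2⟩
    · exact ⟨1, by simpa using
        cover_mem_Z3two hyz (aux_ell_eq_one hyz (fun c h1 h2 => hv ⟨c, h1, h2⟩))⟩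
  have hc := comm_mem_Z3three humem hvmem
  rwa [comm_eq_strict hxy hyz ca cb] at hc

lemma midx_mem_Z3three {x c z : P} (hxc : x < c) (hcz : c < z) :
    (d3 R (x,x,z) : Flag3 P → R) ∈ Z3three P R := by
  have hv : (d3 R (x,c,z) : Flag3 P → R) ∈ Z3two P R := strict_mem_Z3two hxc hcz
  obtain ⟨ca, humem⟩ : ∃ ca : R, d3 R (x,x,c) + ca • d3 R (x,c,c) ∈ Z3two P R := by
    rcases em (∃ d, x < d ∧ d < c) with ⟨d, hd1, hd2⟩ | hu
    · exact ⟨0, by simpa using midx_mem_Z3two hd1 hd2⟩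
    · exact ⟨1, by simpa using
        cover_mem_Z3two hxc (aux_ell_eq_one hxc (fun d h1 h2 => hu ⟨d, h1, h2⟩))⟩
  have key : mul3 P R (d3 R (x,x,c)) (d3 R (x,c,z)) = ∑ w ∈ Finset.Icc x c, d3 R (x,w,z) :=
    mul3_d3 x x c z (le_refl x) hxc.le hcz.le
  have z1 : mul3 P R (d3 R (x,c,c)) (d3 R (x,c,z)) = 0 := mul3_d3_zero _ _ (Or.inl hxc.ne')
  have z2 : mul3 P R (d3 R (x,c,z)) (d3 R (x,x,c)) = 0 := mul3_d3_zero _ _ (Or.inl hxc.ne')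
  have z3 : mul3 P R (d3 R (x,c,z)) (d3 R (x,c,c)) = 0 := mul3_d3_zero _ _ (Or.inl hxc.ne')
  have hcomm := comm_mem_Z3three humem hv
  rw [mul3_add_left, mul3_add_right, mul3_smul_left, mul3_smul_right, key,
    z1, z2, z3, smul_zero, add_zero, zero_add, sub_zero,
    Finset.Icc_eq_cons_Ioc hxc.le, Finset.sum_cons] at hcomm
  have hstrict : ∑ w ∈ Finset.Ioc x c, (d3 R (x,w,z) : Flag3 P → R) ∈ Z3three P R :=
    Submodule.sum_mem _ (fun w hw => by
      rw [Finset.mem_Ioc] at hw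
      exact strict_mem_Z3three hw.1 (lt_of_le_of_lt hw.2 hcz))
  simpa using Submodule.sub_mem _ hcomm hstrict

lemma midz_mem_Z3three {x c z : P} (hxc : x < c) (hcz : c < z) :
    (d3 R (x,z,z) : Flag3 P → R) ∈ Z3three P R := by
  have hu : (d3 R (x,c,z) : Flag3 P → R) ∈ Z3two P R := strict_mem_Z3two hxc hcz
  obtain ⟨cb, hvmem⟩ : ∃ cb : R, cb • d3 R (c,c,z) + d3 R (c,z,z) ∈ Z3two P R := by
    rcases em (∃ d, c < d ∧ d < z) with ⟨d, hd1, hd2⟩ | hv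
    · exact ⟨0, by simpa using midz_mem_Z3two hd1 hd2⟩
    · exact ⟨1, by simpa using
        cover_mem_Z3two hcz (aux_ell_eq_one hcz (fun d h1 h2 => hv ⟨d, h1, h2⟩))⟩
  have key : mul3 P R (d3 R (x,c,z)) (d3 R (c,z,z)) = ∑ w ∈ Finset.Icc c z, d3 R (x,w,z) :=
    mul3_d3 x c z z hxc.le hcz.le (le_refl z)
  have z1 : mul3 P R (d3 R (x,c,z)) (d3 R (c,c,z)) = 0 := mul3_d3_zero _ _ (Or.inr hcz.ne')
  have z2 : mul3 P R (d3 R (c,c,z)) (d3 R (x,c,z)) = 0 := mul3_d3_zero _ _ (Or.inl hxc.ne')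
  have z3 : mul3 P R (d3 R (c,z,z)) (d3 R (x,c,z)) = 0 :=
    mul3_d3_zero _ _ (Or.inl (hxc.trans hcz).ne')
  have hcomm := comm_mem_Z3three hu hvmem
  rw [mul3_add_left, mul3_add_right, mul3_smul_left, mul3_smul_right, key,
    z1, z2, z3, smul_zero, add_zero, zero_add, sub_zero,
    Finset.Icc_eq_cons_Ico hcz.le, Finset.sum_cons] at hcomm
  have hstrict : ∑ w ∈ Finset.Ico c z, (d3 R (x,w,z) : Flag3 P → R) ∈ Z3three P R :=
    Submodule.sum_mem _ (fun w hw => by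
      rw [Finset.mem_Ico] at hw
      exact strict_mem_Z3three (hxc.trans_le hw.1) hw.2)
  simpa using Submodule.sub_mem _ hcomm hstrict

lemma ge2_mem_Z3three {t : Flag3 P} (h2 : 2 ≤ ell t.1.1 t.1.2.2) :
    (d3 R t.1 : Flag3 P → R) ∈ Z3three P R := by
  obtain ⟨⟨x, y, z⟩, hxy, hyz⟩ := t
  replace hxy : x ≤ y := hxy
  replace hyz : y ≤ z := hyz
  simp only [] at h2 ⊢
  obtain ⟨c, hc1, hc2⟩ := aux_middle_of_two_le_ell h2
  rcases hxy.lt_or_eq with hx | hx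
  · rcases hyz.lt_or_eq with hz | hz
    · exact strict_mem_Z3three hx hz
    · subst hz; exact midz_mem_Z3three hc1 hc2
  · subst hx
    rcases hyz.lt_or_eq with hz | hz
    · exact midx_mem_Z3three hc1 hc2
    · exfalso; subst hz
      rw [aux_ell_self] at h2
      exact absurd h2 (by norm_num)

lemma Z3three_le_J2 : Z3three P R ≤ J3 P R 2 := by
  rw [Z3three, commSub, Submodule.span_le]
  rintro h ⟨f, hf, g, hg, rfl⟩
  obtain ⟨hf1, hf2⟩ := Z3two_le_Wsub hf
  obtain ⟨hg1, hg2⟩ := Z3two_le_Wsub hg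
  rintro ⟨⟨x, y, z⟩, hxy, hyz⟩ ht
  have ht' : ell x z < 2 := by exact_mod_cast ht
  rcases flag_cases ⟨(x,y,z), hxy, hyz⟩ ht' with hdeg | ⟨hlt, h1, hy⟩
  · have hz : x = z := hdeg
    subst hz
    have hy2 : y = x := le_antisymm hyz hxy
    subst hy2
    rw [Pi.sub_apply, mul3_deg f g _ hxy hyz, mul3_deg g f _ hxy hyz,
      hf1 _ rfl, hg1 _ rfl]
    simp
  · have hlt' : x < z := hlt
    have h1' : ell x z = 1 := h1
    have hy' : y = x ∨ y = z := hy
    rcases hy' with h | h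
    · have he : (⟨(x,y,z), hxy, hyz⟩ : Flag3 P)
          = ⟨(x,x,z), le_refl x, hxy.trans hyz⟩ :=
        Subtype.ext (show ((x:P),y,z) = (x,x,z) by rw [h])
      rw [Pi.sub_apply, he,
        mul3_cover_x f g (hxy.trans hyz) h1' (hf1 _ rfl),
        mul3_cover_x g f (hxy.trans hyz) h1' (hg1 _ rfl),
        ← hf2 x z (hxy.trans hyz) h1', ← hg2 x z (hxy.trans hyz) h1']
      ring
    · have he : (⟨(x,y,z), hxy, hyz⟩ : Flag3 P)
          = ⟨(x,z,z), hxy.trans hyz, le_refl z⟩ :=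
        Subtype.ext (show ((x:P),y,z) = (x,z,z) by rw [h])
      rw [Pi.sub_apply, he,
        mul3_cover_z f g (hxy.trans hyz) h1' (hg1 _ rfl),
        mul3_cover_z g f (hxy.trans hyz) h1' (hf1 _ rfl),
        ← hf2 x z (hxy.trans hyz) h1', ← hg2 x z (hxy.trans hyz) h1']
      ring

lemma J2_le_Z3three [Fintype (Flag3 P)] : J3 P R 2 ≤ Z3three P R := by
  intro f hf
  rw [expand_d3 f]
  refine Submodule.sum_mem _ fun t _ => ?_
  by_cases hz : f t = 0
  · rw [hz, zero_smul]; exact Submodule.zero_mem _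
  · refine Submodule.smul_mem _ _ (ge2_mem_Z3three ?_)
    by_contra h2
    exact hz (hf t (by exact_mod_cast not_le.mp h2))

lemma Z3three_eq_J2 [Fintype (Flag3 P)] : Z3three P R = J3 P R 2 :=
  le_antisymm Z3three_le_J2 J2_le_Z3three

end Mul3Lemmas

/-- The quotient algebra `Z^3_2(P,R)/Z^3_3(P,R)` is isomorphic, as an
`R`-algebra, to a direct sum of copies of `R` indexed by the pairs `x < y` with
`l(x,y) = 1`, with coordinatewise multiplication. -/
theorem Z3_two_quotient_Z3_three_iso
    {P R : Type*} [PartialOrder P] [Fintype P] [DecidableEq P] [LocallyFiniteOrder P]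
    [CommRing R] :
    ∃ hmul : ∀ f g : Z3two P R, mul3 P R f.1 g.1 ∈ Z3two P R,
    ∃ Φ : (Z3two P R ⧸ (Z3three P R).comap (Z3two P R).subtype) ≃ₗ[R]
        ({p : P × P // p.1 < p.2 ∧ ell p.1 p.2 = 1} → R),
      ∀ f g : Z3two P R,
        Φ (Submodule.Quotient.mk (⟨mul3 P R f.1 g.1, hmul f g⟩ : Z3two P R)) =
          Φ (Submodule.Quotient.mk f) * Φ (Submodule.Quotient.mk g) := by
  classical
  haveI : Fintype (Flag3 P) := Fintype.ofFinite _
  have hmul : ∀ f g : Z3two P R, mul3 P R f.1 g.1 ∈ Z3two P R := by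
    intro f g
    obtain ⟨hf1, hf2⟩ := Z3two_le_Wsub f.2
    obtain ⟨hg1, hg2⟩ := Z3two_le_Wsub g.2
    refine Wsub_le_Z3two ⟨?_, ?_⟩
    · rintro ⟨⟨x, y, z⟩, hxy, hyz⟩ ht
      have hz : x = z := ht
      subst hz
      have hy : y = x := le_antisymm hyz hxy
      subst hy
      rw [mul3_deg _ _ _ hxy hyz, hf1 _ rfl, zero_mul]
    · intro x z hxz h1
      rw [mul3_cover_x _ _ hxz h1 (hf1 _ rfl), mul3_cover_z _ _ hxz h1 (hg1 _ rfl)]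
  refine ⟨hmul, ?_⟩
  let π : Z3two P R →ₗ[R] ({p : P × P // p.1 < p.2 ∧ ell p.1 p.2 = 1} → R) :=
    { toFun := fun f p => f.1 ⟨(p.1.1, p.1.1, p.1.2), le_refl _, le_of_lt p.2.1⟩
      map_add' := fun f g => rfl
      map_smul' := fun c f => rfl }
  have hker : (Z3three P R).comap (Z3two P R).subtype = LinearMap.ker π := by
    ext f
    rw [Submodule.mem_comap, LinearMap.mem_ker]
    constructor
    · intro hmem
      rw [Z3three_eq_J2] at hmem
      funext p
      exact hmem ⟨(p.1.1, p.1.1, p.1.2), le_refl _, le_of_lt p.2.1⟩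
        (by show ell p.1.1 p.1.2 < _; rw [p.2.2]; exact_mod_cast one_lt_two)
    · intro hzero
      rw [Z3three_eq_J2]
      obtain ⟨hf1, hf2⟩ := Z3two_le_Wsub f.2
      rintro ⟨⟨x, y, z⟩, hxy, hyz⟩ ht
      have ht' : ell x z < 2 := by exact_mod_cast ht
      rcases flag_cases ⟨(x,y,z), hxy, hyz⟩ ht' with hdeg | ⟨hlt, h1, hy⟩
      · exact hf1 _ hdeg
      · have hlt' : x < z := hlt
        have h1' : ell x z = 1 := h1
        have hval : f.1 ⟨(x,x,z), le_refl x, hxy.trans hyz⟩ = 0 :=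
          congrFun hzero ⟨(x, z), hlt', h1'⟩
        rcases (show y = x ∨ y = z from hy) with h | h
        · have he : (⟨(x,y,z), hxy, hyz⟩ : Flag3 P)
              = ⟨(x,x,z), le_refl x, hxy.trans hyz⟩ :=
            Subtype.ext (show ((x:P),y,z) = (x,x,z) by rw [h])
          rw [he]; exact hval
        · have he : (⟨(x,y,z), hxy, hyz⟩ : Flag3 P)
              = ⟨(x,z,z), hxy.trans hyz, le_refl z⟩ :=
            Subtype.ext (show ((x:P),y,z) = (x,z,z) by rw [h])
          rw [he]
          show f.1 ⟨(x,z,z), hxy.trans hyz, le_refl z⟩ = 0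
          rw [← hf2 x z (hxy.trans hyz) h1']; exact hval
  have hsurj : Function.Surjective π := by
    intro gfun
    refine ⟨⟨fun t => if h : t.1.1 < t.1.2.2 ∧ ell t.1.1 t.1.2.2 = 1
        then gfun ⟨(t.1.1, t.1.2.2), h⟩ else 0, ?_⟩, ?_⟩
    · refine Wsub_le_Z3two ⟨?_, ?_⟩
      · rintro ⟨⟨x, y, z⟩, hxy, hyz⟩ ht
        have hz : x = z := ht
        exact dif_neg (fun hcon => hcon.1.ne hz)
      · intro x z hxz h1
        rfl
    · funext p
      show (if h : p.1.1 < p.1.2 ∧ ell p.1.1 p.1.2 = 1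
          then gfun ⟨(p.1.1, p.1.2), h⟩ else 0) = gfun p
      rw [dif_pos ⟨p.2.1, p.2.2⟩]
  have hle : (Z3three P R).comap (Z3two P R).subtype ≤ LinearMap.ker π := le_of_eq hker
  let πbar := Submodule.liftQ _ π hle
  have hinj : LinearMap.ker πbar = ⊥ := Submodule.ker_liftQ_eq_bot' _ _ hker
  have hsur2 : LinearMap.range πbar = ⊤ := by
    rw [Submodule.range_liftQ]
    exact LinearMap.range_eq_top.mpr hsurj
  let Φ := LinearEquiv.ofBijective πbar
    ⟨LinearMap.ker_eq_bot.mp hinj, LinearMap.range_eq_top.mp hsur2⟩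
  refine ⟨Φ, ?_⟩
  intro f g
  have happ : ∀ h : Z3two P R, Φ (Submodule.Quotient.mk h) = π h := by
    intro h
    show πbar (Submodule.Quotient.mk h) = π h
    exact Submodule.liftQ_apply _ _ _
  rw [happ, happ, happ]
  funext p
  obtain ⟨⟨x, z⟩, hp⟩ := p
  obtain ⟨hf1, hf2⟩ := Z3two_le_Wsub f.2
  obtain ⟨hg1, hg2⟩ := Z3two_le_Wsub g.2
  show mul3 P R f.1 g.1 ⟨(x,x,z), le_refl x, le_of_lt hp.1⟩ = _
  rw [mul3_cover_x f.1 g.1 (le_of_lt hp.1) hp.2 (hf1 _ rfl),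
    ← hg2 x z (le_of_lt hp.1) hp.2]
  rfl
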